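/- Let (Q,Z) be a gentle pair, K a division ring, sigma : Q_1 -> Aut(K), Lambda = K_sigma Q / <Z> the semilinear gentle algebra, and Gamma = K_{sigma'} Q^✂(Z) the semilinear path algebra of the Zembyk excision with sigma'_{a'} = sigma_a. Then there is an injective homomorphism of K-rings Delta : Lambda -> Gamma, defined on generators by e_v + <Z> ↦ e_{v'} for v non-relational, e_u + <Z> ↦ e_{u(sharp)} + e_{u(flat)} for u relational, and a + <Z> ↦ a' for each arrow a. Moreover the kernel of the induced map K_sigma Q -> Gamma is exactly <Z>. -/

import Mathlib

attribute [local instance] Classical.propDecidable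

/-- A quiver: vertices, arrows, head and tail maps. -/
structure Quiv where
  V : Type
  A : Type
  h : A → V
  t : A → V

/-- A (possibly empty) list of arrows is a path when consecutive arrows compose:
`t aᵢ = h aᵢ₊₁` (paths are written right-to-left as in the paper). -/
def Quiv.IsPath (Q : Quiv) (p : List Q.A) : Prop :=
  p.Chain' (fun x y => Q.t x = Q.h y)

/-- A locally gentle pair `(Q,Z)`: `Z` is a set of length-2 paths (pairs `(b,a)` with
`t b = h a`), every vertex is head (resp. tail) of at most two arrows, and each arrow
extends in at most one way inside `Z` and at most one way outside `Z` on each side. -/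
structure LocallyGentle (Q : Quiv) (Z : Set (Q.A × Q.A)) : Prop where
  comp : ∀ p ∈ Z, Q.t p.1 = Q.h p.2
  head_two : ∀ (v : Q.V) (a b c : Q.A),
    Q.h a = v → Q.h b = v → Q.h c = v → a = b ∨ a = c ∨ b = c
  tail_two : ∀ (v : Q.V) (a b c : Q.A),
    Q.t a = v → Q.t b = v → Q.t c = v → a = b ∨ a = c ∨ b = c
  rel_right : ∀ b a a' : Q.A, (b, a) ∈ Z → (b, a') ∈ Z → a = a'
  adm_right : ∀ b a a' : Q.A, Q.t b = Q.h a → Q.t b = Q.h a' →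
    (b, a) ∉ Z → (b, a') ∉ Z → a = a'
  rel_left : ∀ b c c' : Q.A, (c, b) ∈ Z → (c', b) ∈ Z → c = c'
  adm_left : ∀ b c c' : Q.A, Q.t c = Q.h b → Q.t c' = Q.h b →
    (c, b) ∉ Z → (c', b) ∉ Z → c = c'

/-- A vertex is relational if some relation `ba ∈ Z` passes through it,
i.e. `t b = v = h a`. -/
def Relational (Q : Quiv) (Z : Set (Q.A × Q.A)) (v : Q.V) : Prop :=
  ∃ b a : Q.A, (b, a) ∈ Z ∧ Q.t b = v ∧ Q.h a = v

/-- A choice, for every relational vertex `v`, of a relation `(b v, a v) ∈ Z` through `v`. -/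
structure RelSelection (Q : Quiv) (Z : Set (Q.A × Q.A)) where
  b : Q.V → Q.A
  a : Q.V → Q.A
  spec : ∀ v : Q.V, Relational Q Z v →
    (b v, a v) ∈ Z ∧ Q.t (b v) = v ∧ Q.h (a v) = v

/-- The Zembyk excision `Q^✂(Z)`: the quiver obtained by simultaneously taking the levee
at every relational vertex (equivalently, by iterating levees until no relation remains;
the result is independent of order).  A relational vertex `u` is replaced by
`u(♯) = Sum.inr (u, true)` and `u(♭) = Sum.inr (u, false)`. -/
noncomputable def excision (Q : Quiv) (Z : Set (Q.A × Q.A)) (s : RelSelection Q Z) : Quiv where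
  V := {u : Q.V // ¬ Relational Q Z u} ⊕ ({u : Q.V // Relational Q Z u} × Bool)
  A := Q.A
  h := fun x =>
    if hx : Relational Q Z (Q.h x) then
      Sum.inr (⟨Q.h x, hx⟩, if (s.b (Q.h x), x) ∈ Z then false else true)
    else Sum.inl ⟨Q.h x, hx⟩
  t := fun x =>
    if hx : Relational Q Z (Q.t x) then
      Sum.inr (⟨Q.t x, hx⟩, if (x, s.a (Q.t x)) ∈ Z then true else false)
    else Sum.inl ⟨Q.t x, hx⟩

/-- A presentation of the semilinear path algebra `K_σ Q` on a ring `Λ`: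
a `K`-ring structure `ι`, trivial paths `e v`, arrows `ar x`, the defining relations,
and freeness: the paths of `Q` (trivial and nontrivial) form a left `K`-basis. -/
structure SLPA (K : Type) [DivisionRing K] (Q : Quiv) [Fintype Q.V]
    (σ : Q.A → K ≃+* K) (Λ : Type) [Ring Λ] where
  ι : K →+* Λ
  e : Q.V → Λ
  ar : Q.A → Λ
  sum_e : (∑ v : Q.V, e v) = 1
  e_idem : ∀ v : Q.V, e v * e v = e v
  e_orth : ∀ u v : Q.V, u ≠ v → e u * e v = 0
  e_comm : ∀ (v : Q.V) (lam : K), e v * ι lam = ι lam * e v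
  he_ar : ∀ x : Q.A, e (Q.h x) * ar x = ar x
  ar_te : ∀ x : Q.A, ar x * e (Q.t x) = ar x
  semilinear : ∀ (x : Q.A) (lam : K), ar x * ι lam = ι (σ x lam) * ar x
  free : Function.Bijective
    (fun c : (Q.V ⊕ {p : List Q.A // p ≠ [] ∧ Q.IsPath p}) →₀ K =>
      c.sum fun p lam => ι lam * Sum.elim e (fun q => (q.1.map ar).prod) p)

section AuxSLPA

variable {K : Type} [DivisionRing K] {Q : Quiv} [Fintype Q.V] {σ : Q.A → K ≃+* K}
  {Λ : Type} [Ring Λ] (S : SLPA K Q σ Λ)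

/-- The index type for the path basis. -/
abbrev QIdx (Q : Quiv) := Q.V ⊕ {p : List Q.A // p ≠ [] ∧ Q.IsPath p}

/-- Product of arrows along a list. -/
def SLPA.path (p : List Q.A) : Λ := (p.map S.ar).prod

lemma SLPA.path_nil : S.path ([] : List Q.A) = 1 := rfl

lemma SLPA.path_cons (x : Q.A) (p : List Q.A) : S.path (x :: p) = S.ar x * S.path p := by
  simp [SLPA.path]

lemma SLPA.path_append (p q : List Q.A) : S.path (p ++ q) = S.path p * S.path q := by
  simp [SLPA.path]

lemma SLPA.e_mul_e' (u v : Q.V) : S.e u * S.e v = if u = v then S.e u else 0 := by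
  split
  · next h => subst h; exact S.e_idem u
  · next h => exact S.e_orth u v h

lemma SLPA.e_mul_ar (v : Q.V) (x : Q.A) :
    S.e v * S.ar x = if v = Q.h x then S.ar x else 0 := by
  split
  · next h => subst h; exact S.he_ar x
  · next h => rw [← S.he_ar x, ← mul_assoc, S.e_orth _ _ h, zero_mul]

lemma SLPA.ar_mul_e (x : Q.A) (v : Q.V) :
    S.ar x * S.e v = if Q.t x = v then S.ar x else 0 := by
  split
  · next h => rw [← h]; exact S.ar_te x
  · next h => rw [← S.ar_te x, mul_assoc, S.e_orth _ _ h, mul_zero]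

lemma SLPA.ar_mul_ar_zero {x y : Q.A} (h : Q.t x ≠ Q.h y) : S.ar x * S.ar y = 0 := by
  rw [← S.he_ar y, ← mul_assoc, S.ar_mul_e, if_neg h, zero_mul]

lemma SLPA.path_mul_e : ∀ (p : List Q.A) (hp : p ≠ []) (v : Q.V),
    S.path p * S.e v = if Q.t (p.getLast hp) = v then S.path p else 0
  | [], hp, _ => absurd rfl hp
  | [x], _, v => by
      simp only [SLPA.path, List.map, List.prod_cons, List.prod_nil, mul_one, List.getLast]
      exact S.ar_mul_e x v
  | x :: y :: rest, _, v => by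
      rw [S.path_cons, mul_assoc, SLPA.path_mul_e (y :: rest) (List.cons_ne_nil y rest) v]
      conv_rhs => rw [List.getLast_cons (List.cons_ne_nil y rest)]
      rw [mul_ite, mul_zero, ← S.path_cons]

lemma SLPA.path_eq_zero : ∀ {p : List Q.A}, ¬ Q.IsPath p → S.path p = 0
  | [], h => absurd List.isChain_nil h
  | [_], h => absurd (List.isChain_singleton _) h
  | x :: y :: rest, h => by
      simp only [Quiv.IsPath, List.Chain', List.isChain_cons_cons] at h
      push_neg at h
      by_cases hxy : Q.t x = Q.h y
      · rw [S.path_cons, SLPA.path_eq_zero (h hxy), mul_zero]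
      · rw [S.path_cons, S.path_cons, ← mul_assoc, S.ar_mul_ar_zero hxy, zero_mul]

lemma SLPA.path_mul_iota : ∀ (p : List Q.A) (lam : K),
    S.path p * S.ι lam = S.ι (p.foldr (fun x l => σ x l) lam) * S.path p
  | [], lam => by simp [SLPA.path_nil]
  | x :: p, lam => by
      rw [S.path_cons, mul_assoc, SLPA.path_mul_iota p lam, ← mul_assoc, S.semilinear,
        mul_assoc, ← S.path_cons, List.foldr_cons]

/-- Basis monomials. -/
def SLPA.mono : QIdx Q → Λ := Sum.elim S.e (fun q => (q.1.map S.ar).prod)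

lemma SLPA.mono_inr (q : {p : List Q.A // p ≠ [] ∧ Q.IsPath p}) :
    S.mono (Sum.inr q) = S.path q.1 := rfl

/-- Evaluation of a coefficient function. -/
def SLPA.eval (c : QIdx Q →₀ K) : Λ := c.sum fun p lam => S.ι lam * S.mono p

lemma SLPA.eval_bij : Function.Bijective S.eval := S.free

lemma SLPA.eval_add (c d : QIdx Q →₀ K) : S.eval (c + d) = S.eval c + S.eval d := by
  classical
  exact Finsupp.sum_add_index' (fun p => by simp) (fun p a b => by rw [map_add, add_mul])

lemma SLPA.eval_zero : S.eval 0 = 0 := by simp [SLPA.eval]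

lemma SLPA.eval_single (p : QIdx Q) (lam : K) :
    S.eval (Finsupp.single p lam) = S.ι lam * S.mono p :=
  Finsupp.sum_single_index (by simp)

lemma SLPA.mono_mul_iota (p : QIdx Q) (lam : K) :
    S.mono p * S.ι lam =
      S.ι (Sum.elim (fun _ => lam) (fun q => q.1.foldr (fun x l => σ x l) lam) p) * S.mono p := by
  cases p with
  | inl v => exact S.e_comm v lam
  | inr q => exact S.path_mul_iota q.1 lam

end AuxSLPA
section ExcisionAux

variable {Q : Quiv} {Z : Set (Q.A × Q.A)}

lemma exc_t_eq_h {s : RelSelection Q Z} {x y : Q.A}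
    (h : (excision Q Z s).t x = (excision Q Z s).h y) : Q.t x = Q.h y := by
  simp only [excision] at h
  split_ifs at h <;>
    simp_all [Sum.inl.injEq, Sum.inr.injEq, Subtype.mk.injEq, Prod.mk.injEq]

lemma exc_ne_of_Z (lg : LocallyGentle Q Z) (s : RelSelection Q Z) {x y : Q.A}
    (hZ : (x, y) ∈ Z) : (excision Q Z s).t x ≠ (excision Q Z s).h y := by
  have hv : Q.t x = Q.h y := lg.comp (x, y) hZ
  have hrel : Relational Q Z (Q.h y) := ⟨x, y, hZ, hv, rfl⟩
  have hspec := s.spec (Q.h y) hrel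
  have hiff : (x, s.a (Q.h y)) ∈ Z ↔ (s.b (Q.h y), y) ∈ Z := by
    constructor
    · intro h1
      have : x = s.b (Q.h y) := lg.rel_left (s.a (Q.h y)) x (s.b (Q.h y)) h1 hspec.1
      exact this ▸ hZ
    · intro h2
      have : x = s.b (Q.h y) := lg.rel_left y x (s.b (Q.h y)) hZ h2
      exact this ▸ hspec.1
  intro h
  simp only [excision] at h
  rw [hv] at h
  rw [dif_pos hrel, dif_pos hrel] at h
  simp only [Sum.inr.injEq, Prod.mk.injEq, true_and] at h
  by_cases h1 : (x, s.a (Q.h y)) ∈ Z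
  · rw [if_pos h1, if_pos (hiff.mp h1)] at h
    exact absurd h (by simp)
  · rw [if_neg h1, if_neg (fun h2 => h1 (hiff.mpr h2))] at h
    exact absurd h (by simp)

lemma exc_comp_of_notZ (lg : LocallyGentle Q Z) (s : RelSelection Q Z) {x y : Q.A}
    (hv : Q.t x = Q.h y) (hxy : (x, y) ∉ Z) :
    (excision Q Z s).t x = (excision Q Z s).h y := by
  simp only [excision]
  rw [hv]
  by_cases hrel : Relational Q Z (Q.h y)
  · rw [dif_pos hrel, dif_pos hrel]
    have hspec := s.spec (Q.h y) hrel
    simp only [Sum.inr.injEq, Prod.mk.injEq, true_and]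
    by_cases h1 : (x, s.a (Q.h y)) ∈ Z
    · rw [if_pos h1, if_neg]
      intro h2
      have hx : x = s.b (Q.h y) := lg.rel_left (s.a (Q.h y)) x (s.b (Q.h y)) h1 hspec.1
      exact hxy (by rw [hx]; exact h2)
    · rw [if_neg h1, if_pos]
      by_contra h2
      have : x = s.b (Q.h y) :=
        lg.adm_left y x (s.b (Q.h y)) hv hspec.2.1 hxy h2
      exact h1 (this ▸ hspec.1)
  · rw [dif_neg hrel, dif_neg hrel]

end ExcisionAux
section ChainAux

variable {Q : Quiv} {Z : Set (Q.A × Q.A)}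

lemma not_chain'_decomp {α : Type _} {R : α → α → Prop} :
    ∀ {l : List α}, ¬ l.Chain' R → ∃ l1 x y l2, l = l1 ++ x :: y :: l2 ∧ ¬ R x y
  | [], h => absurd List.isChain_nil h
  | [x], h => absurd (List.isChain_singleton x) h
  | x :: y :: rest, h => by
      simp only [List.Chain', List.isChain_cons_cons] at h
      push_neg at h
      by_cases hxy : R x y
      · obtain ⟨l1, a, b, l2, hl, hr⟩ := not_chain'_decomp (h hxy)
        exact ⟨x :: l1, a, b, l2, by rw [hl]; rfl, hr⟩
      · exact ⟨[], x, y, rest, rfl, hxy⟩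

lemma exc_isPath_imp {s : RelSelection Q Z} {p : List Q.A}
    (h : (excision Q Z s).IsPath p) : Q.IsPath p :=
  List.IsChain.imp (fun _ _ hxy => exc_t_eq_h hxy) h

lemma exc_isPath_notZ (lg : LocallyGentle Q Z) {s : RelSelection Q Z} {p : List Q.A}
    (h : (excision Q Z s).IsPath p) : p.Chain' (fun x y => (x, y) ∉ Z) :=
  List.IsChain.imp (fun _ _ hxy hZ => exc_ne_of_Z lg s hZ hxy) h

lemma exc_isPath_of (lg : LocallyGentle Q Z) (s : RelSelection Q Z) {p : List Q.A}
    (hQ : Q.IsPath p) (hZ : p.Chain' (fun x y => (x, y) ∉ Z)) :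
    (excision Q Z s).IsPath p := by
  have hQ' := List.isChain_iff_getElem.mp hQ
  have hZ' := List.isChain_iff_getElem.mp hZ
  exact List.isChain_iff_getElem.mpr fun i hi => exc_comp_of_notZ lg s (hQ' i hi) (hZ' i hi)

noncomputable def excEquiv (s : RelSelection Q Z) :
    ({u : Q.V // ¬ Relational Q Z u} ⊕ ({u : Q.V // Relational Q Z u} × Bool))
      ≃ (excision Q Z s).V := ⟨id, id, fun _ => rfl, fun _ => rfl⟩

@[simp] lemma excEquiv_apply (s : RelSelection Q Z)
    (i : {u : Q.V // ¬ Relational Q Z u} ⊕ ({u : Q.V // Relational Q Z u} × Bool)) :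
    excEquiv s i = i := rfl

lemma excV_inl_inj (s : RelSelection Q Z) {a b : {u : Q.V // ¬ Relational Q Z u}}
    (h : (Sum.inl a : (excision Q Z s).V) = Sum.inl b) : a = b := Sum.inl.inj h

lemma excV_inr_inj (s : RelSelection Q Z) {a b : {u : Q.V // Relational Q Z u} × Bool}
    (h : (Sum.inr a : (excision Q Z s).V) = Sum.inr b) : a = b := Sum.inr.inj h

lemma excV_inl_ne_inr (s : RelSelection Q Z) (a : {u : Q.V // ¬ Relational Q Z u})
    (b : {u : Q.V // Relational Q Z u} × Bool) :
    (Sum.inl a : (excision Q Z s).V) ≠ Sum.inr b := fun h => Sum.inl_ne_inr h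

lemma excV_inr_ne_inl (s : RelSelection Q Z) (a : {u : Q.V // Relational Q Z u} × Bool)
    (b : {u : Q.V // ¬ Relational Q Z u}) :
    (Sum.inr a : (excision Q Z s).V) ≠ Sum.inl b := fun h => Sum.inr_ne_inl h

end ChainAux
section Build
set_option linter.unusedSectionVars false

variable {K : Type} [DivisionRing K] {Q : Quiv} [Fintype Q.V]
  {Z : Set (Q.A × Q.A)} {σ : Q.A → K ≃+* K} {s : RelSelection Q Z}
  {Λ Γ : Type} [Ring Λ] [Ring Γ]
  (S : SLPA K Q σ Λ) [Fintype (excision Q Z s).V] (T : SLPA K (excision Q Z s) σ Γ)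

/-- Image of trivial paths. -/
noncomputable def imgE : Q.V → Γ := fun v =>
  if h : Relational Q Z v then
    T.e (Sum.inr (⟨v, h⟩, true)) + T.e (Sum.inr (⟨v, h⟩, false))
  else T.e (Sum.inl ⟨v, h⟩)

/-- Image of basis monomials. -/
noncomputable def img : QIdx Q → Γ := Sum.elim (imgE T) (fun q => T.path q.1)

noncomputable def Gmap : (QIdx Q →₀ K) → Γ := fun c => c.sum fun p lam => T.ι lam * img T p

lemma Gmap_add (c d : QIdx Q →₀ K) : Gmap T (c + d) = Gmap T c + Gmap T d :=
  Finsupp.sum_add_index' (fun p => by simp) (fun p a b => by rw [map_add, add_mul])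

lemma Gmap_zero : Gmap T (0 : QIdx Q →₀ K) = 0 := by simp [Gmap]

lemma Gmap_single (p : QIdx Q) (lam : K) :
    Gmap T (Finsupp.single p lam) = T.ι lam * img T p :=
  Finsupp.sum_single_index (by simp)

noncomputable def phi : Λ → Γ :=
  fun y => Gmap T ((Equiv.ofBijective _ S.eval_bij).symm y)

lemma phi_eval (c : QIdx Q →₀ K) : phi S T (S.eval c) = Gmap T c := by
  unfold phi
  rw [Equiv.ofBijective_symm_apply_apply]

lemma eval_symm (y : Λ) : S.eval ((Equiv.ofBijective _ S.eval_bij).symm y) = y :=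
  (Equiv.ofBijective _ S.eval_bij).apply_symm_apply y

lemma phi_add (y z : Λ) : phi S T (y + z) = phi S T y + phi S T z := by
  have h : (Equiv.ofBijective _ S.eval_bij).symm (y + z)
      = (Equiv.ofBijective _ S.eval_bij).symm y + (Equiv.ofBijective _ S.eval_bij).symm z := by
    apply (Equiv.ofBijective _ S.eval_bij).injective
    show S.eval _ = S.eval _
    rw [S.eval_add, eval_symm, eval_symm, eval_symm]
  unfold phi
  rw [h, Gmap_add]

lemma phi_zero : phi S T (0 : Λ) = 0 := by
  have h : (Equiv.ofBijective _ S.eval_bij).symm (0 : Λ) = 0 := by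
    rw [Equiv.symm_apply_eq]
    exact (S.eval_zero).symm
  unfold phi
  rw [h, Gmap_zero]

/-- `phi` bundled as additive hom. -/
noncomputable def phiAdd : Λ →+ Γ :=
  { toFun := phi S T, map_zero' := phi_zero S T, map_add' := phi_add S T }

lemma phi_iota_mono (p : QIdx Q) (lam : K) :
    phi S T (S.ι lam * S.mono p) = T.ι lam * img T p := by
  rw [← S.eval_single, phi_eval, Gmap_single]

lemma phi_mono (p : QIdx Q) : phi S T (S.mono p) = img T p := by
  have := phi_iota_mono S T p 1
  simpa using this

end Build
section Build2
set_option linter.unusedSectionVars false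

variable {K : Type} [DivisionRing K] {Q : Quiv} [Fintype Q.V]
  {Z : Set (Q.A × Q.A)} {σ : Q.A → K ≃+* K} {s : RelSelection Q Z}
  {Λ Γ : Type} [Ring Λ] [Ring Γ]
  (S : SLPA K Q σ Λ) [Fintype (excision Q Z s).V] (T : SLPA K (excision Q Z s) σ Γ)

lemma imgE_sum : (∑ v : Q.V, imgE T v) = 1 := by
  have lhs : (∑ v : Q.V, imgE T v)
      = ∑ i : {u : Q.V // Relational Q Z u} ⊕ {u : Q.V // ¬ Relational Q Z u},
          imgE T (Equiv.sumCompl (Relational Q Z) i) :=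
    (Fintype.sum_equiv (Equiv.sumCompl (Relational Q Z)) _ _ (fun i => rfl)).symm
  have rhs : (∑ w : (excision Q Z s).V, T.e w)
      = ∑ i : {u : Q.V // ¬ Relational Q Z u} ⊕ ({u : Q.V // Relational Q Z u} × Bool),
          T.e (excEquiv s i) :=
    (Fintype.sum_equiv (excEquiv s) _ _ (fun i => rfl)).symm
  rw [← T.sum_e, rhs, lhs, Fintype.sum_sum_type, Fintype.sum_sum_type, Fintype.sum_prod_type]
  have h1 : (∑ u : {u : Q.V // Relational Q Z u},
        imgE T (Equiv.sumCompl (Relational Q Z) (Sum.inl u)))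
      = ∑ u : {u : Q.V // Relational Q Z u},
          (T.e (Sum.inr (u, true)) + T.e (Sum.inr (u, false))) := by
    apply Finset.sum_congr rfl
    intro u _
    show imgE T u.1 = _
    rw [imgE, dif_pos u.2]
  have h2 : (∑ u : {u : Q.V // ¬ Relational Q Z u},
        imgE T (Equiv.sumCompl (Relational Q Z) (Sum.inr u)))
      = ∑ u : {u : Q.V // ¬ Relational Q Z u}, T.e (Sum.inl u) := by
    apply Finset.sum_congr rfl
    intro u _
    show imgE T u.1 = _
    rw [imgE, dif_neg u.2]
  rw [h1, h2, add_comm]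
  congr 1
  exact Finset.sum_congr rfl (fun u _ => by simp [Fintype.sum_bool])

lemma phi_one : phi S T (1 : Λ) = 1 := by
  have h1 : (1 : Λ) = ∑ v : Q.V, S.mono (Sum.inl v) := by rw [← S.sum_e]; rfl
  have h2 : phi S T (∑ v : Q.V, S.mono (Sum.inl v))
      = ∑ v : Q.V, phi S T (S.mono (Sum.inl v)) :=
    map_sum (phiAdd S T) (fun v => S.mono (Sum.inl v)) Finset.univ
  rw [h1, h2]
  have : ∀ v : Q.V, phi S T (S.mono (Sum.inl v)) = imgE T v := fun v => phi_mono S T (Sum.inl v)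
  rw [Finset.sum_congr rfl (fun v _ => this v), imgE_sum]

lemma phi_path (r : List Q.A) : phi S T (S.path r) = T.path r := by
  rcases eq_or_ne r [] with rfl | hne
  · exact phi_one S T
  by_cases hr : Q.IsPath r
  · exact phi_mono S T (Sum.inr ⟨r, hne, hr⟩)
  · rw [S.path_eq_zero hr, phi_zero, SLPA.path_eq_zero T (fun h => hr (exc_isPath_imp h))]

end Build2
section Build3a
set_option linter.unusedSectionVars false

variable {K : Type} [DivisionRing K] {Q : Quiv} [Fintype Q.V]
  {Z : Set (Q.A × Q.A)} {σ : Q.A → K ≃+* K} {s : RelSelection Q Z}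
  {Λ Γ : Type} [Ring Λ] [Ring Γ]
  (S : SLPA K Q σ Λ) [Fintype (excision Q Z s).V] (T : SLPA K (excision Q Z s) σ Γ)

lemma imgE_mul_imgE (u v : Q.V) :
    imgE T u * imgE T v = if u = v then imgE T u else 0 := by
  by_cases huv : u = v
  · subst huv
    erw [if_pos rfl, imgE]
    split
    · next h =>
      have hTF : (Sum.inr (⟨u, h⟩, true) : (excision Q Z s).V) ≠ Sum.inr (⟨u, h⟩, false) :=
        fun hh => by simpa using congrArg Prod.snd (excV_inr_inj s hh)
      have hFT : (Sum.inr (⟨u, h⟩, false) : (excision Q Z s).V) ≠ Sum.inr (⟨u, h⟩, true) :=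
        fun hh => by simpa using congrArg Prod.snd (excV_inr_inj s hh)
      erw [add_mul, mul_add, mul_add, T.e_idem, T.e_idem, T.e_orth _ _ hTF, T.e_orth _ _ hFT,
        add_zero, zero_add]
    · next h => exact T.e_idem _
  · erw [if_neg huv, imgE, imgE]
    split <;> split
    · next h1 h2 =>
      have hne : ∀ b1 b2 : Bool,
          (Sum.inr (⟨u, h1⟩, b1) : (excision Q Z s).V) ≠ Sum.inr (⟨v, h2⟩, b2) :=
        fun b1 b2 hh => huv (congrArg (fun p => p.1.1) (excV_inr_inj s hh))
      erw [add_mul, mul_add, mul_add, T.e_orth _ _ (hne _ _), T.e_orth _ _ (hne _ _),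
        T.e_orth _ _ (hne _ _), T.e_orth _ _ (hne _ _)]
      simp
    · next h1 h2 =>
      erw [add_mul, T.e_orth _ _ (excV_inr_ne_inl s _ _), T.e_orth _ _ (excV_inr_ne_inl s _ _)]
      simp
    · next h1 h2 =>
      erw [mul_add, T.e_orth _ _ (excV_inl_ne_inr s _ _), T.e_orth _ _ (excV_inl_ne_inr s _ _)]
      simp
    · next h1 h2 =>
      exact T.e_orth _ _ (fun hh => huv (congrArg (fun p => p.1) (excV_inl_inj s hh)))

lemma imgE_mul_ar (v : Q.V) (x : Q.A) :
    imgE T v * T.ar x = if v = Q.h x then T.ar x else 0 := by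
  have hh : (excision Q Z s).h x = if hx : Relational Q Z (Q.h x) then
      Sum.inr (⟨Q.h x, hx⟩, if (s.b (Q.h x), x) ∈ Z then false else true)
    else Sum.inl ⟨Q.h x, hx⟩ := rfl
  by_cases hvx : v = Q.h x
  · subst hvx
    erw [if_pos rfl, imgE]
    split
    · next hrel =>
      erw [add_mul, SLPA.e_mul_ar, SLPA.e_mul_ar, hh, dif_pos hrel]
      by_cases hbz : (s.b (Q.h x), x) ∈ Z
      · erw [if_pos hbz,
          if_neg (fun hh2 => by simpa using congrArg Prod.snd (excV_inr_inj s hh2)),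
          if_pos rfl, zero_add]
      · erw [if_neg hbz, if_pos rfl,
          if_neg (fun hh2 => by simpa using congrArg Prod.snd (excV_inr_inj s hh2)), add_zero]
    · next hrel =>
      erw [SLPA.e_mul_ar, hh, dif_neg hrel, if_pos rfl]
  · erw [if_neg hvx, imgE]
    split
    · next hrel =>
      erw [add_mul, SLPA.e_mul_ar, SLPA.e_mul_ar, hh]
      split
      · next hx =>
        erw [if_neg (fun hh2 => hvx (congrArg (fun p => p.1.1) (excV_inr_inj s hh2))),
          if_neg (fun hh2 => hvx (congrArg (fun p => p.1.1) (excV_inr_inj s hh2))), add_zero]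
      · next hx =>
        erw [if_neg (excV_inr_ne_inl s _ _), if_neg (excV_inr_ne_inl s _ _), add_zero]
    · next hrel =>
      erw [SLPA.e_mul_ar, hh]
      split
      · next hx => erw [if_neg (excV_inl_ne_inr s _ _)]
      · next hx => erw [if_neg (fun hh2 => hvx (congrArg (fun p => p.1) (excV_inl_inj s hh2)))]

lemma path_mul_imgE (r : List Q.A) (hr : r ≠ []) (v : Q.V) :
    T.path r * imgE T v = if Q.t (r.getLast hr) = v then T.path r else 0 := by
  have ht : (excision Q Z s).t (r.getLast hr)
      = if hx : Relational Q Z (Q.t (r.getLast hr)) then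
      Sum.inr (⟨Q.t (r.getLast hr), hx⟩,
        if (r.getLast hr, s.a (Q.t (r.getLast hr))) ∈ Z then true else false)
    else Sum.inl ⟨Q.t (r.getLast hr), hx⟩ := rfl
  by_cases hvx : Q.t (r.getLast hr) = v
  · subst hvx
    erw [if_pos rfl, imgE]
    split
    · next hrel =>
      erw [mul_add, SLPA.path_mul_e T r hr, SLPA.path_mul_e T r hr, ht, dif_pos hrel]
      by_cases hbz : (r.getLast hr, s.a (Q.t (r.getLast hr))) ∈ Z
      · erw [if_pos hbz, if_pos rfl,
          if_neg (fun hh2 => by simpa using congrArg Prod.snd (excV_inr_inj s hh2)), add_zero]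
      · erw [if_neg hbz,
          if_neg (fun hh2 => by simpa using congrArg Prod.snd (excV_inr_inj s hh2)),
          if_pos rfl, zero_add]
    · next hrel =>
      erw [SLPA.path_mul_e T r hr, ht, dif_neg hrel, if_pos rfl]
  · erw [if_neg hvx, imgE]
    split
    · next hrel =>
      erw [mul_add, SLPA.path_mul_e T r hr, SLPA.path_mul_e T r hr, ht]
      split
      · next hx =>
        erw [if_neg (fun hh2 => hvx (congrArg (fun p => p.1.1) (excV_inr_inj s hh2))),
          if_neg (fun hh2 => hvx (congrArg (fun p => p.1.1) (excV_inr_inj s hh2))), add_zero]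
      · next hx =>
        erw [if_neg (excV_inl_ne_inr s _ _), if_neg (excV_inl_ne_inr s _ _), add_zero]
    · next hrel =>
      erw [SLPA.path_mul_e T r hr, ht]
      split
      · next hx => erw [if_neg (excV_inr_ne_inl s _ _)]
      · next hx => erw [if_neg (fun hh2 => hvx (congrArg (fun p => p.1) (excV_inl_inj s hh2)))]

end Build3a
section Build3
set_option linter.unusedSectionVars false

variable {K : Type} [DivisionRing K] {Q : Quiv} [Fintype Q.V]
  {Z : Set (Q.A × Q.A)} {σ : Q.A → K ≃+* K} {s : RelSelection Q Z}
  {Λ Γ : Type} [Ring Λ] [Ring Γ]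
  (S : SLPA K Q σ Λ) [Fintype (excision Q Z s).V] (T : SLPA K (excision Q Z s) σ Γ)

lemma imgE_mul_iota (v : Q.V) (lam : K) : imgE T v * T.ι lam = T.ι lam * imgE T v := by
  rw [imgE]
  split
  · rw [add_mul, mul_add]; erw [T.e_comm, T.e_comm]
  · erw [T.e_comm]

lemma img_mul_iota (p : QIdx Q) (lam : K) :
    img T p * T.ι lam =
      T.ι (Sum.elim (fun _ => lam) (fun q => q.1.foldr (fun x l => σ x l) lam) p) * img T p := by
  cases p with
  | inl v => exact imgE_mul_iota T v lam
  | inr q => exact SLPA.path_mul_iota T q.1 lam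

lemma phi_mono_mul (p q : QIdx Q) :
    phi S T (S.mono p * S.mono q) = img T p * img T q := by
  cases p with
  | inl u =>
    cases q with
    | inl v =>
      have hS : S.mono (Sum.inl u) * S.mono (Sum.inl v)
          = if u = v then S.mono (Sum.inl u) else 0 := S.e_mul_e' u v
      have hT : img T (Sum.inl u) * img T (Sum.inl v)
          = if u = v then img T (Sum.inl u) else 0 := imgE_mul_imgE T u v
      rw [hS, hT]
      split
      · exact phi_mono S T (Sum.inl u)
      · exact phi_zero S T
    | inr q =>
      obtain ⟨l, hl⟩ := q
      cases l with
      | nil => exact absurd rfl hl.1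
      | cons x rest =>
        have hS : S.mono (Sum.inl u) * S.mono (Sum.inr ⟨x :: rest, hl⟩)
            = if u = Q.h x then S.path (x :: rest) else 0 := by
          show S.e u * S.path (x :: rest) = _
          rw [S.path_cons, ← mul_assoc, S.e_mul_ar]
          split
          · rw [← S.path_cons]
          · rw [zero_mul]
        have hT : img T (Sum.inl u) * img T (Sum.inr ⟨x :: rest, hl⟩)
            = if u = Q.h x then T.path (x :: rest) else 0 := by
          show imgE T u * T.path (x :: rest) = _
          erw [SLPA.path_cons T, ← mul_assoc, imgE_mul_ar]
          split
          · erw [← SLPA.path_cons T]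
          · rw [zero_mul]
        rw [hS, hT]
        split
        · exact phi_path S T (x :: rest)
        · exact phi_zero S T
  | inr p =>
    cases q with
    | inl v =>
      have hS : S.mono (Sum.inr p) * S.mono (Sum.inl v)
          = if Q.t (p.1.getLast p.2.1) = v then S.path p.1 else 0 :=
        SLPA.path_mul_e S p.1 p.2.1 v
      have hT : img T (Sum.inr p) * img T (Sum.inl v)
          = if Q.t (p.1.getLast p.2.1) = v then T.path p.1 else 0 :=
        path_mul_imgE T p.1 p.2.1 v
      rw [hS, hT]
      split
      · exact phi_path S T p.1
      · exact phi_zero S T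
    | inr q =>
      show phi S T (S.path p.1 * S.path q.1) = T.path p.1 * T.path q.1
      erw [← SLPA.path_append S, ← SLPA.path_append T]
      exact phi_path S T _

lemma phi_iota_mul (lam : K) (y : Λ) : phi S T (S.ι lam * y) = T.ι lam * phi S T y := by
  obtain ⟨c, rfl⟩ : ∃ c, y = S.eval c := ⟨_, (eval_symm S y).symm⟩
  have h1 : S.ι lam * S.eval c = S.eval (c.mapRange (fun m => lam * m) (mul_zero lam)) := by
    rw [SLPA.eval, SLPA.eval, Finsupp.mul_sum, Finsupp.sum_mapRange_index (fun p => by simp)]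
    exact Finsupp.sum_congr (fun p _ => by rw [map_mul, mul_assoc])
  rw [h1, phi_eval, phi_eval, Gmap, Gmap,
    Finsupp.sum_mapRange_index (fun p => by simp), Finsupp.mul_sum]
  exact Finsupp.sum_congr (fun p _ => by rw [map_mul, mul_assoc])

lemma phi_mul (y z : Λ) : phi S T (y * z) = phi S T y * phi S T z := by
  obtain ⟨c, rfl⟩ : ∃ c, y = S.eval c := ⟨_, (eval_symm S y).symm⟩
  obtain ⟨d, rfl⟩ : ∃ d, z = S.eval d := ⟨_, (eval_symm S z).symm⟩
  have key3 : ∀ (p q : QIdx Q) (b : K),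
      phi S T (S.mono p * (S.ι b * S.mono q)) = img T p * (T.ι b * img T q) := by
    intro p q b
    rw [← mul_assoc, S.mono_mul_iota, mul_assoc, phi_iota_mul S T, phi_mono_mul S T,
      ← mul_assoc, ← mul_assoc, img_mul_iota]
  have key2 : ∀ p : QIdx Q, phi S T (S.mono p * S.eval d) = img T p * Gmap T d := by
    intro p
    calc phi S T (S.mono p * S.eval d)
        = phi S T (d.sum fun q b => S.mono p * (S.ι b * S.mono q)) := by
          rw [SLPA.eval, Finsupp.mul_sum]
      _ = d.sum (fun q b => phi S T (S.mono p * (S.ι b * S.mono q))) :=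
          map_finsuppSum (phiAdd S T) _ _
      _ = d.sum (fun q b => img T p * (T.ι b * img T q)) :=
          Finsupp.sum_congr (fun q _ => key3 p q _)
      _ = img T p * Gmap T d := by rw [Gmap, Finsupp.mul_sum]
  calc phi S T (S.eval c * S.eval d)
      = phi S T (c.sum fun p a => S.ι a * S.mono p * S.eval d) := by
        rw [SLPA.eval, Finsupp.sum_mul]
    _ = c.sum (fun p a => phi S T (S.ι a * S.mono p * S.eval d)) :=
        map_finsuppSum (phiAdd S T) _ _
    _ = c.sum (fun p a => T.ι a * img T p * Gmap T d) := by
        apply Finsupp.sum_congr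
        intro p _
        rw [mul_assoc, phi_iota_mul S T, key2 p, mul_assoc]
    _ = Gmap T c * Gmap T d := by rw [Gmap, Gmap, Finsupp.sum_mul]
    _ = phi S T (S.eval c) * phi S T (S.eval d) := by rw [phi_eval, phi_eval]

/-- `phi` bundled as ring hom. -/
noncomputable def phiRing : Λ →+* Γ :=
  { toFun := phi S T, map_one' := phi_one S T, map_mul' := phi_mul S T,
    map_zero' := phi_zero S T, map_add' := phi_add S T }

lemma phiRing_apply (y : Λ) : phiRing S T y = phi S T y := rfl

end Build3
section Build4
set_option linter.unusedSectionVars false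

variable {K : Type} [DivisionRing K] {Q : Quiv} [Fintype Q.V]
  {Z : Set (Q.A × Q.A)} {σ : Q.A → K ≃+* K} {s : RelSelection Q Z}
  {Λ Γ : Type} [Ring Λ] [Ring Γ]
  (S : SLPA K Q σ Λ) [Fintype (excision Q Z s).V] (T : SLPA K (excision Q Z s) σ Γ)

lemma phi_ar (x : Q.A) : phi S T (S.ar x) = T.ar x := by
  have h1 : S.ar x = S.path [x] := by simp [SLPA.path]
  have h2 : T.ar x = T.path [x] := by erw [SLPA.path_cons T, SLPA.path_nil, mul_one]
  rw [h1, h2]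
  exact phi_path S T [x]

lemma phi_e (v : Q.V) : phi S T (S.e v) = imgE T v := phi_mono S T (Sum.inl v)

lemma phi_iota (lam : K) : phi S T (S.ι lam) = T.ι lam := by
  have h := phi_iota_mul S T lam 1
  rwa [mul_one, phi_one S T, mul_one] at h

lemma phi_gen_zero (lg : LocallyGentle Q Z) {b a : Q.A} (hZ : (b, a) ∈ Z) (u : Λ) :
    phi S T (S.ar b * S.ar a * u) = 0 := by
  rw [phi_mul S T, phi_mul S T, phi_ar, phi_ar,
    SLPA.ar_mul_ar_zero T (exc_ne_of_Z lg s hZ), zero_mul]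

lemma path_mem_span (r : List Q.A) (hbad : ¬ r.Chain' (fun x y => (x, y) ∉ Z)) (lam : K) :
    S.ι lam * S.path r
      ∈ Ideal.span {z : Λ | ∃ p ∈ Z, ∃ u : Λ, z = S.ar p.1 * S.ar p.2 * u} := by
  obtain ⟨l1, x, y, l2, rfl, hxy⟩ := not_chain'_decomp hbad
  have hZxy : (x, y) ∈ Z := not_not.mp hxy
  have hgen : S.ar x * S.ar y * S.path l2
      ∈ {z : Λ | ∃ p ∈ Z, ∃ u : Λ, z = S.ar p.1 * S.ar p.2 * u} :=
    ⟨(x, y), hZxy, S.path l2, rfl⟩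
  have h1 : S.path (l1 ++ x :: y :: l2) = S.path l1 * (S.ar x * S.ar y * S.path l2) := by
    rw [SLPA.path_append, S.path_cons, S.path_cons, ← mul_assoc (S.ar x)]
  rw [h1, ← mul_assoc]
  exact Ideal.mul_mem_left _ _ (Ideal.subset_span hgen)

/-- Pushforward of coefficients along the excision. -/
noncomputable def push (s : RelSelection Q Z) :
    QIdx Q → K → (QIdx (excision Q Z s) →₀ K)
  | Sum.inl v, lam =>
      if h : Relational Q Z v then
        Finsupp.single (Sum.inl (Sum.inr (⟨v, h⟩, true))) lam
          + Finsupp.single (Sum.inl (Sum.inr (⟨v, h⟩, false))) lam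
      else Finsupp.single (Sum.inl (Sum.inl ⟨v, h⟩)) lam
  | Sum.inr q, lam =>
      if hq : (excision Q Z s).IsPath q.1 then
        Finsupp.single (Sum.inr ⟨q.1, q.2.1, hq⟩) lam
      else 0

lemma teval_push (p : QIdx Q) (lam : K) :
    T.eval (push s p lam) = T.ι lam * img T p := by
  cases p with
  | inl v =>
    show T.eval (push s (Sum.inl v) lam) = T.ι lam * imgE T v
    erw [push, imgE]
    split
    · next h =>
      erw [T.eval_add, T.eval_single, T.eval_single, mul_add]
      rfl
    · next h =>
      erw [T.eval_single]
      rfl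
  | inr q =>
    show T.eval (push s (Sum.inr q) lam) = T.ι lam * T.path q.1
    erw [push]
    split
    · next hq =>
      erw [T.eval_single]
      rfl
    · next hq =>
      erw [T.eval_zero, SLPA.path_eq_zero T hq, mul_zero]

lemma push_apply_vertexT (v : Q.V) (hv : Relational Q Z v) (p : QIdx Q) (lam : K) :
    push s p lam (Sum.inl (Sum.inr (⟨v, hv⟩, true)))
      = if p = Sum.inl v then lam else 0 := by
  cases p with
  | inl v' =>
    erw [push]
    split
    · next h =>
      erw [Finsupp.add_apply, Finsupp.single_apply, Finsupp.single_apply]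
      by_cases hv' : v' = v
      · subst hv'
        erw [if_pos rfl,
          if_neg (fun hh => by simpa using congrArg Prod.snd (excV_inr_inj s (Sum.inl.inj hh))),
          add_zero, if_pos rfl]
      · erw [if_neg (fun hh => hv' (congrArg (fun p => p.1.1) (excV_inr_inj s (Sum.inl.inj hh)))),
          if_neg (fun hh => hv' (congrArg (fun p => p.1.1) (excV_inr_inj s (Sum.inl.inj hh)))),
          add_zero, if_neg (fun hh => hv' (Sum.inl.inj hh))]
    · next h =>
      erw [Finsupp.single_apply,
        if_neg (fun hh => excV_inl_ne_inr s _ _ (Sum.inl.inj hh)),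
        if_neg (fun hh => h (by erw [show v' = v from Sum.inl.inj hh]; exact hv))]
  | inr q =>
    erw [push]
    split
    · erw [Finsupp.single_apply, if_neg (fun hh => Sum.inr_ne_inl hh)]
    · erw [Finsupp.zero_apply, if_neg (fun hh => Sum.inr_ne_inl hh)]

lemma push_apply_vertexN (v : Q.V) (hv : ¬ Relational Q Z v) (p : QIdx Q) (lam : K) :
    push s p lam (Sum.inl (Sum.inl ⟨v, hv⟩))
      = if p = Sum.inl v then lam else 0 := by
  cases p with
  | inl v' =>
    erw [push]
    split
    · next h =>
      erw [Finsupp.add_apply, Finsupp.single_apply, Finsupp.single_apply,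
        if_neg (fun hh => excV_inr_ne_inl s _ _ (Sum.inl.inj hh)),
        if_neg (fun hh => excV_inr_ne_inl s _ _ (Sum.inl.inj hh)), add_zero,
        if_neg (fun hh => hv (by erw [← show v' = v from Sum.inl.inj hh]; exact h))]
    · next h =>
      erw [Finsupp.single_apply]
      by_cases hv' : v' = v
      · subst hv'
        erw [if_pos rfl, if_pos rfl]
      · erw [if_neg (fun hh => hv' (congrArg Subtype.val (excV_inl_inj s (Sum.inl.inj hh)))),
          if_neg (fun hh => hv' (Sum.inl.inj hh))]
  | inr q =>
    erw [push]
    split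
    · erw [Finsupp.single_apply, if_neg (fun hh => Sum.inr_ne_inl hh)]
    · erw [Finsupp.zero_apply, if_neg (fun hh => Sum.inr_ne_inl hh)]

lemma push_apply_path (q' : {p : List Q.A // p ≠ [] ∧ Q.IsPath p})
    (hg : (excision Q Z s).IsPath q'.1) (p : QIdx Q) (lam : K) :
    push s p lam (Sum.inr ⟨q'.1, q'.2.1, hg⟩)
      = if p = Sum.inr q' then lam else 0 := by
  cases p with
  | inl v' =>
    erw [push]
    split
    · erw [Finsupp.add_apply, Finsupp.single_apply, Finsupp.single_apply,
        if_neg (fun hh => Sum.inl_ne_inr hh), if_neg (fun hh => Sum.inl_ne_inr hh),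
        add_zero, if_neg (fun hh => Sum.inl_ne_inr hh)]
    · erw [Finsupp.single_apply, if_neg (fun hh => Sum.inl_ne_inr hh)]
  | inr q'' =>
    erw [push]
    split
    · next hq =>
      erw [Finsupp.single_apply]
      by_cases he : q'' = q'
      · subst he
        erw [if_pos rfl, if_pos rfl]
      · erw [if_neg (show ¬((Sum.inr q'' : QIdx Q) = Sum.inr q') from
            fun hh => he (Sum.inr.inj hh)),
          if_neg (show ¬((Sum.inr ⟨q''.1, q''.2.1, hq⟩ : QIdx (excision Q Z s))
              = Sum.inr ⟨q'.1, q'.2.1, hg⟩) from by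
            intro hh
            have h2 : (⟨q''.1, q''.2.1, hq⟩
                : {p : List (excision Q Z s).A // p ≠ [] ∧ (excision Q Z s).IsPath p})
                = ⟨q'.1, q'.2.1, hg⟩ := Sum.inr.inj hh
            have h3 := congrArg Subtype.val h2
            exact he (Subtype.ext h3))]
    · next hq =>
      erw [Finsupp.zero_apply, if_neg]
      intro hh
      have he : q'' = q' := Sum.inr.inj hh
      exact hq (by erw [congrArg Subtype.val he]; exact hg)

end Build4
section Build5
set_option linter.unusedSectionVars false

variable {K : Type} [DivisionRing K] {Q : Quiv} [Fintype Q.V]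
  {Z : Set (Q.A × Q.A)} {σ : Q.A → K ≃+* K} {s : RelSelection Q Z}
  {Λ Γ : Type} [Ring Λ] [Ring Γ]
  (S : SLPA K Q σ Λ) [Fintype (excision Q Z s).V] (T : SLPA K (excision Q Z s) σ Γ)

lemma sum_ite_eq_coeff (c : QIdx Q →₀ K) (p0 : QIdx Q) :
    (c.sum fun p lam => if p = p0 then lam else 0) = c p0 := by
  rw [Finsupp.sum_ite_eq' c p0 (fun _ lam => lam)]
  split
  · rfl
  · next h => exact (Finsupp.notMem_support_iff.mp h).symm

lemma ker_sub_span (lg : LocallyGentle Q Z) (y : Λ) (hy : phi S T y = 0) :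
    y ∈ Ideal.span {z : Λ | ∃ p ∈ Z, ∃ u : Λ, z = S.ar p.1 * S.ar p.2 * u} := by
  obtain ⟨c, rfl⟩ : ∃ c, y = S.eval c := ⟨_, (eval_symm S y).symm⟩
  rw [phi_eval] at hy
  set d : QIdx (excision Q Z s) →₀ K := c.sum (fun p lam => push s p lam) with hd
  have htev : T.eval d = 0 := by
    have h1 : T.eval d = c.sum (fun p lam => T.eval (push s p lam)) := by
      rw [hd]
      exact map_finsuppSum (AddMonoidHom.mk' T.eval T.eval_add) c _
    have h2 : c.sum (fun p lam => T.eval (push s p lam)) = Gmap T c :=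
      Finsupp.sum_congr (fun p _ => teval_push T p _)
    rw [h1, h2, hy]
  have hd0 : d = 0 := T.eval_bij.injective (by rw [htev, T.eval_zero])
  have hcv : ∀ v : Q.V, c (Sum.inl v) = 0 := by
    intro v
    by_cases hv : Relational Q Z v
    · have h1 : (c.sum fun p lam => push s p lam (Sum.inl (Sum.inr (⟨v, hv⟩, true))))
          = c (Sum.inl v) :=
        (Finsupp.sum_congr (fun p _ => push_apply_vertexT v hv p _)).trans
          (sum_ite_eq_coeff c (Sum.inl v))
      have h0 : d (Sum.inl (Sum.inr (⟨v, hv⟩, true))) = 0 := by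
        rw [hd0, Finsupp.zero_apply]
      rw [hd, Finsupp.sum_apply, h1] at h0
      exact h0
    · have h1 : (c.sum fun p lam => push s p lam (Sum.inl (Sum.inl ⟨v, hv⟩)))
          = c (Sum.inl v) :=
        (Finsupp.sum_congr (fun p _ => push_apply_vertexN v hv p _)).trans
          (sum_ite_eq_coeff c (Sum.inl v))
      have h0 : d (Sum.inl (Sum.inl ⟨v, hv⟩)) = 0 := by
        rw [hd0, Finsupp.zero_apply]
      rw [hd, Finsupp.sum_apply, h1] at h0
      exact h0
  have hcq : ∀ (q : {p : List Q.A // p ≠ [] ∧ Q.IsPath p}),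
      (excision Q Z s).IsPath q.1 → c (Sum.inr q) = 0 := by
    intro q hg
    have h1 : (c.sum fun p lam => push s p lam (Sum.inr ⟨q.1, q.2.1, hg⟩))
        = c (Sum.inr q) :=
      (Finsupp.sum_congr (fun p _ => push_apply_path q hg p _)).trans
        (sum_ite_eq_coeff c (Sum.inr q))
    have h0 : d (Sum.inr ⟨q.1, q.2.1, hg⟩) = 0 := by
      rw [hd0, Finsupp.zero_apply]
    rw [hd, Finsupp.sum_apply, h1] at h0
    exact h0
  show (c.sum fun p lam => S.ι lam * S.mono p)
      ∈ Ideal.span {z : Λ | ∃ p ∈ Z, ∃ u : Λ, z = S.ar p.1 * S.ar p.2 * u}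
  rw [Finsupp.sum]
  refine Ideal.sum_mem _ (fun p hp => ?_)
  cases p with
  | inl v => exact absurd (hcv v) (Finsupp.mem_support_iff.mp hp)
  | inr q =>
    by_cases hg : (excision Q Z s).IsPath q.1
    · exact absurd (hcq q hg) (Finsupp.mem_support_iff.mp hp)
    · have hbad : ¬ q.1.Chain' (fun x y => (x, y) ∉ Z) :=
        fun hch => hg (exc_isPath_of lg s q.2.2 hch)
      exact path_mem_span S q.1 hbad (c (Sum.inr q))

end Build5
/-- For a gentle pair `(Q,Z)`, there is a homomorphism of `K`-rings from the semilinear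
path algebra `K_σ Q` to `Γ = K_{σ'} Q^✂(Z)` sending `e_v ↦ e_{v'}` for `v` non-relational,
`e_u ↦ e_{u(♯)} + e_{u(♭)}` for `u` relational, and `a ↦ a'`, whose kernel is exactly
`⟨Z⟩`; hence it induces an injective `K`-ring homomorphism `Λ = K_σ Q/⟨Z⟩ → Γ`. -/
theorem stmt9 (K : Type) [DivisionRing K] (Q : Quiv) [Fintype Q.V] [Finite Q.A]
    (Z : Set (Q.A × Q.A)) (lg : LocallyGentle Q Z)
    (hgentle : {p : List Q.A | Q.IsPath p ∧ p.Chain' (fun x y => (x, y) ∉ Z)}.Finite)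
    (σ : Q.A → K ≃+* K) (s : RelSelection Q Z)
    (Λfree Γ : Type) [Ring Λfree] [Ring Γ]
    (S : SLPA K Q σ Λfree)
    [Fintype (excision Q Z s).V]
    (T : SLPA K (excision Q Z s) σ Γ) :
    ∃ φ : Λfree →+* Γ,
      (∀ lam : K, φ (S.ι lam) = T.ι lam) ∧
      (∀ x : Q.A, φ (S.ar x) = T.ar x) ∧
      (∀ v : Q.V, φ (S.e v) =
        if h : Relational Q Z v then
          T.e (Sum.inr (⟨v, h⟩, true)) + T.e (Sum.inr (⟨v, h⟩, false))
        else T.e (Sum.inl ⟨v, h⟩)) ∧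
      (∀ y : Λfree, φ y = 0 ↔
        y ∈ Ideal.span {z : Λfree | ∃ p ∈ Z, ∃ u : Λfree, z = S.ar p.1 * S.ar p.2 * u}) := by
  classical
  have hle : Ideal.span {z : Λfree | ∃ p ∈ Z, ∃ u : Λfree, z = S.ar p.1 * S.ar p.2 * u}
      ≤ RingHom.ker (phiRing S T) := by
    rw [Ideal.span_le]
    rintro z ⟨p, hp, u, rfl⟩
    exact RingHom.mem_ker.mpr (phi_gen_zero S T lg hp u)
  refine ⟨phiRing S T, fun lam => phi_iota S T lam, fun x => phi_ar S T x,
    fun v => phi_e S T v, fun y => ⟨fun h => ker_sub_span S T lg y h,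
      fun hy => RingHom.mem_ker.mp (hle hy)⟩⟩
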